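/- Let γ > 0 and let f be a nonnegative measurable function on ℝ³ such that F_γ∘f ∈ L^{3/2}(ℝ³). Then there exists R_γ ∈ (0,1] such that sup over 0 < r < R_γ and over x₀ ∈ ℝ³ of the quantity ((log(1/r))^{1+γ}/r) · ∫_{B_r(x₀)} f(x) dx is finite. -/

import Mathlib

open MeasureTheory Real
open scoped ENNReal NNReal

private lemma aux_rlog_bound {γ r : ℝ} (hγ : 0 < γ) (hr : 0 < r) (hr1 : r < 1) :
    Real.log (1 / r) ^ (1 + γ) * r ≤ (2 * (1 + γ)) ^ (1 + γ) := by
  set t : ℝ := 1 / r with ht_def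
  have ht : 1 < t := one_lt_one_div hr hr1
  have ht0 : 0 < t := by linarith
  have h1γ : (0:ℝ) < 1 + γ := by linarith
  set δ : ℝ := (2 * (1 + γ))⁻¹ with hδ_def
  have hδ : 0 < δ := by positivity
  have hlog : Real.log t ≤ δ⁻¹ * t ^ δ := by
    have h1 : Real.log (t ^ δ) = δ * Real.log t := Real.log_rpow ht0 δ
    have h2 : Real.log (t ^ δ) ≤ t ^ δ := by
      have := Real.log_le_sub_one_of_pos (x := t ^ δ) (by positivity)
      linarith
    have h3 : δ * Real.log t ≤ t ^ δ := by rw [← h1]; exact h2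
    calc Real.log t = δ⁻¹ * (δ * Real.log t) := by field_simp
      _ ≤ δ⁻¹ * t ^ δ := by
          exact mul_le_mul_of_nonneg_left h3 (by positivity)
  have hlognn : 0 ≤ Real.log t := Real.log_nonneg ht.le
  have hpow : Real.log t ^ (1 + γ) ≤ (δ⁻¹ * t ^ δ) ^ (1 + γ) :=
    Real.rpow_le_rpow hlognn hlog h1γ.le
  have hsplit : (δ⁻¹ * t ^ δ) ^ (1 + γ) = δ⁻¹ ^ (1 + γ) * t ^ (δ * (1 + γ)) := by
    rw [Real.mul_rpow (by positivity) (by positivity), ← Real.rpow_mul ht0.le]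
  have hδval : δ * (1 + γ) = 1 / 2 := by
    rw [hδ_def]; field_simp
  have hr_eq : r = t⁻¹ := by rw [ht_def]; field_simp
  have hfin : t ^ ((1:ℝ)/2) * t⁻¹ ≤ 1 := by
    have : t ^ ((1:ℝ)/2) * t⁻¹ = t ^ ((1:ℝ)/2 - 1) := by
      rw [Real.rpow_sub ht0, Real.rpow_one]; ring
    rw [this]
    exact Real.rpow_le_one_of_one_le_of_nonpos ht.le (by norm_num)
  have hδinv : δ⁻¹ = 2 * (1 + γ) := by rw [hδ_def, inv_inv]
  calc Real.log t ^ (1 + γ) * r ≤ δ⁻¹ ^ (1 + γ) * t ^ ((1:ℝ)/2) * t⁻¹ := by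
        rw [hr_eq]
        apply mul_le_mul_of_nonneg_right _ (by positivity)
        rw [← hδval]
        calc Real.log t ^ (1 + γ) ≤ (δ⁻¹ * t ^ δ) ^ (1 + γ) := hpow
          _ = δ⁻¹ ^ (1 + γ) * t ^ (δ * (1 + γ)) := hsplit
    _ = δ⁻¹ ^ (1 + γ) * (t ^ ((1:ℝ)/2) * t⁻¹) := by ring
    _ ≤ δ⁻¹ ^ (1 + γ) * 1 := by
        exact mul_le_mul_of_nonneg_left hfin (by positivity)
    _ = (2 * (1 + γ)) ^ (1 + γ) := by rw [mul_one, hδinv]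

private lemma aux_ptwise {γ r s : ℝ} (hγ : 0 < γ) (hr : 0 < r) (hr1 : r < 1) (hs : 0 ≤ s) :
    ENNReal.ofReal s ≤ ENNReal.ofReal (1/r) +
      (ENNReal.ofReal (Real.log (1/r) ^ (1 + γ)))⁻¹ *
        ENNReal.ofReal (s * Real.log (1 + s) ^ (1 + γ)) := by
  have hlr : 0 < Real.log (1/r) := Real.log_pos (one_lt_one_div hr hr1)
  have hL : 0 < Real.log (1/r) ^ (1 + γ) := Real.rpow_pos_of_pos hlr _
  by_cases hcase : s ≤ 1/r
  · exact le_add_of_le_of_nonneg (ENNReal.ofReal_le_ofReal hcase) zero_le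
  · push_neg at hcase
    have key : ENNReal.ofReal s ≤
        (ENNReal.ofReal (Real.log (1/r) ^ (1 + γ)))⁻¹ *
          ENNReal.ofReal (s * Real.log (1 + s) ^ (1 + γ)) := by
      rw [← ENNReal.div_eq_inv_mul]
      rw [ENNReal.le_div_iff_mul_le (Or.inl (ne_of_gt (ENNReal.ofReal_pos.mpr hL))) (Or.inl ENNReal.ofReal_ne_top)]
      rw [← ENNReal.ofReal_mul hs]
      apply ENNReal.ofReal_le_ofReal
      apply mul_le_mul_of_nonneg_left _ hs
      apply Real.rpow_le_rpow hlr.le _ (by linarith)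
      apply Real.log_le_log (by positivity)
      linarith
    exact le_add_of_nonneg_of_le zero_le key

private lemma aux_holder {g : EuclideanSpace ℝ (Fin 3) → ℝ≥0∞} (hg : Measurable g)
    (x₀ : EuclideanSpace ℝ (Fin 3)) (r : ℝ) :
    ∫⁻ x in Metric.ball x₀ r, g x ≤
      (∫⁻ x, g x ^ (3/2 : ℝ)) ^ ((2:ℝ)/3) * (volume (Metric.ball x₀ r)) ^ ((1:ℝ)/3) := by
  set s := Metric.ball x₀ r with hs_def
  have hsm : MeasurableSet s := measurableSet_ball
  have hconj : Real.HolderConjugate (3/2) 3 := by rw [Real.holderConjugate_iff]; norm_num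
  set ind : EuclideanSpace ℝ (Fin 3) → ℝ≥0∞ := s.indicator (fun _ => (1:ℝ≥0∞)) with hind_def
  have hind : Measurable ind := measurable_const.indicator hsm
  have heq : ∀ x, s.indicator g x = (g * ind) x := by
    intro x
    by_cases hx : x ∈ s <;> simp [hind_def, Set.indicator, hx]
  calc ∫⁻ x in s, g x = ∫⁻ x, s.indicator g x := (lintegral_indicator hsm g).symm
    _ = ∫⁻ x, (g * ind) x := by simp_rw [heq]
    _ ≤ (∫⁻ x, g x ^ (3/2 : ℝ)) ^ (1/(3/2) : ℝ) *
          (∫⁻ x, ind x ^ (3:ℝ)) ^ ((1:ℝ)/3) :=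
        ENNReal.lintegral_mul_le_Lp_mul_Lq volume hconj hg.aemeasurable hind.aemeasurable
    _ = (∫⁻ x, g x ^ (3/2 : ℝ)) ^ ((2:ℝ)/3) * (volume s) ^ ((1:ℝ)/3) := by
        congr 1
        · norm_num
        · congr 1
          have h2 : ∀ x, ind x ^ (3:ℝ) = ind x := by
            intro x
            by_cases hx : x ∈ s <;>
              simp [hind_def, Set.indicator, hx,
                ENNReal.zero_rpow_of_pos (by norm_num : (0:ℝ) < 3)]
          simp_rw [h2, hind_def]
          rw [lintegral_indicator hsm]
          simp

theorem exists_radius_sup_lt_top (γ : ℝ) (hγ : 0 < γ)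
    (f : EuclideanSpace ℝ (Fin 3) → ℝ) (hf : Measurable f) (hf0 : ∀ x, 0 ≤ f x)
    (hmem : MemLp (fun x => f x * Real.log (1 + f x) ^ (1 + γ)) (3 / 2) volume) :
    ∃ R : ℝ, 0 < R ∧ R ≤ 1 ∧ ∃ M : ℝ,
      ∀ r : ℝ, 0 < r → r < R → ∀ x₀ : EuclideanSpace ℝ (Fin 3),
        ENNReal.ofReal (Real.log (1 / r) ^ (1 + γ) / r) *
            ∫⁻ x in Metric.ball x₀ r, ENNReal.ofReal (f x) ≤ ENNReal.ofReal M := by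
  set g : EuclideanSpace ℝ (Fin 3) → ℝ := fun x => f x * Real.log (1 + f x) ^ (1 + γ) with hg_def
  have hg0 : ∀ x, 0 ≤ g x := by
    intro x
    apply mul_nonneg (hf0 x)
    apply Real.rpow_nonneg
    apply Real.log_nonneg
    linarith [hf0 x]
  have hgmeas : Measurable g := by
    apply hf.mul
    exact (Real.continuous_rpow_const (by linarith : (0:ℝ) ≤ 1 + γ)).measurable.comp
      (Real.measurable_log.comp (measurable_const.add hf))
  set G : EuclideanSpace ℝ (Fin 3) → ℝ≥0∞ := fun x => ENNReal.ofReal (g x) with hG_def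
  have hGmeas : Measurable G := ENNReal.measurable_ofReal.comp hgmeas
  set N : ℝ≥0∞ := ∫⁻ x, G x ^ (3/2 : ℝ) with hN_def
  have hN : N ≠ ⊤ := by
    have h1 := hmem.2
    rw [eLpNorm_eq_lintegral_rpow_enorm_toReal (by norm_num) (ENNReal.div_lt_top (by norm_num) (by norm_num)).ne] at h1
    have htr : ((3:ℝ≥0∞)/2).toReal = (3/2 : ℝ) := by
      rw [ENNReal.toReal_div]; norm_num
    rw [htr] at h1
    have heq : ∀ x, ‖g x‖ₑ ^ (3/2 : ℝ) = G x ^ (3/2 : ℝ) := by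
      intro x; rw [Real.enorm_eq_ofReal (hg0 x)]
    simp_rw [heq] at h1
    intro hNtop
    rw [← hN_def, hNtop, ENNReal.top_rpow_of_pos (by norm_num)] at h1
    exact (lt_irrefl _ h1).elim
  set V : ℝ≥0∞ := volume (Metric.ball (0:EuclideanSpace ℝ (Fin 3)) 1) with hV_def
  have hVne : V ≠ ⊤ := measure_ball_lt_top.ne
  set C₁ : ℝ := (2 * (1 + γ)) ^ (1 + γ) with hC₁_def
  set K : ℝ≥0∞ := ENNReal.ofReal C₁ * V + N ^ ((2:ℝ)/3) * V ^ ((1:ℝ)/3) with hK_def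
  have hKne : K ≠ ⊤ := by
    rw [hK_def]
    apply ENNReal.add_ne_top.mpr
    constructor
    · exact ENNReal.mul_ne_top ENNReal.ofReal_ne_top hVne
    · exact ENNReal.mul_ne_top (ENNReal.rpow_ne_top_of_nonneg (by norm_num) hN)
        (ENNReal.rpow_ne_top_of_nonneg (by norm_num) hVne)
  refine ⟨1, one_pos, le_refl 1, K.toReal, ?_⟩
  intro r hr hr1 x₀
  -- abbreviations
  have hlr : 0 < Real.log (1/r) := Real.log_pos (one_lt_one_div hr hr1)
  have hL' : 0 < Real.log (1/r) ^ (1 + γ) := Real.rpow_pos_of_pos hlr _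
  set L : ℝ≥0∞ := ENNReal.ofReal (Real.log (1/r) ^ (1 + γ)) with hL_def
  set P : ℝ≥0∞ := ENNReal.ofReal (Real.log (1/r) ^ (1 + γ) / r) with hP_def
  have hvol : volume (Metric.ball x₀ r) = ENNReal.ofReal (r ^ 3) * V := by
    rw [hV_def]
    have := Measure.addHaar_ball (volume : Measure (EuclideanSpace ℝ (Fin 3))) x₀ hr.le
    rwa [finrank_euclideanSpace_fin] at this
  -- Step A
  have stepA : ∫⁻ x in Metric.ball x₀ r, ENNReal.ofReal (f x) ≤
      ENNReal.ofReal (1/r) * volume (Metric.ball x₀ r) +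
        L⁻¹ * ∫⁻ x in Metric.ball x₀ r, G x := by
    calc ∫⁻ x in Metric.ball x₀ r, ENNReal.ofReal (f x)
        ≤ ∫⁻ x in Metric.ball x₀ r, (ENNReal.ofReal (1/r) + L⁻¹ * G x) := by
          apply lintegral_mono
          intro x
          exact aux_ptwise hγ hr hr1 (hf0 x)
      _ = ENNReal.ofReal (1/r) * volume (Metric.ball x₀ r) +
            L⁻¹ * ∫⁻ x in Metric.ball x₀ r, G x := by
          rw [lintegral_add_left measurable_const, setLIntegral_const,
            lintegral_const_mul _ hGmeas]
  -- Hölder for the second piece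
  have hHolder : ∫⁻ x in Metric.ball x₀ r, G x ≤
      N ^ ((2:ℝ)/3) * (volume (Metric.ball x₀ r)) ^ ((1:ℝ)/3) :=
    aux_holder hGmeas x₀ r
  -- Term 1 bound
  have hterm1 : P * (ENNReal.ofReal (1/r) * volume (Metric.ball x₀ r)) ≤
      ENNReal.ofReal C₁ * V := by
    rw [hvol, hP_def]
    have hcombine : ENNReal.ofReal (Real.log (1/r) ^ (1 + γ) / r) *
        (ENNReal.ofReal (1/r) * (ENNReal.ofReal (r ^ 3) * V)) =
        ENNReal.ofReal (Real.log (1/r) ^ (1 + γ) / r * (1/r) * r ^ 3) * V := by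
      rw [ENNReal.ofReal_mul (by positivity), ENNReal.ofReal_mul (by positivity)]
      ring
    rw [hcombine]
    apply mul_le_mul_of_nonneg_right _ zero_le |>.trans_eq rfl
    apply ENNReal.ofReal_le_ofReal
    have harg : Real.log (1/r) ^ (1 + γ) / r * (1/r) * r ^ 3
        = Real.log (1/r) ^ (1 + γ) * r := by
      field_simp
    rw [harg]
    exact aux_rlog_bound hγ hr hr1
  -- Term 2 bound
  have hterm2 : P * (L⁻¹ * ∫⁻ x in Metric.ball x₀ r, G x) ≤
      N ^ ((2:ℝ)/3) * V ^ ((1:ℝ)/3) := by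
    have hPfactor : P = L * ENNReal.ofReal (1/r) := by
      rw [hP_def, hL_def, div_eq_mul_one_div, ENNReal.ofReal_mul hL'.le]
    have hvolpow : (volume (Metric.ball x₀ r)) ^ ((1:ℝ)/3)
        = ENNReal.ofReal r * V ^ ((1:ℝ)/3) := by
      rw [hvol, ENNReal.mul_rpow_of_nonneg _ _ (by norm_num),
        ENNReal.ofReal_rpow_of_nonneg (by positivity) (by norm_num)]
      congr 2
      rw [← Real.rpow_natCast r 3, ← Real.rpow_mul hr.le]
      norm_num
    calc P * (L⁻¹ * ∫⁻ x in Metric.ball x₀ r, G x)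
        = (L * L⁻¹) * (ENNReal.ofReal (1/r) * ∫⁻ x in Metric.ball x₀ r, G x) := by
          rw [hPfactor]; ring
      _ ≤ 1 * (ENNReal.ofReal (1/r) * ∫⁻ x in Metric.ball x₀ r, G x) :=
          mul_le_mul_left (ENNReal.mul_inv_le_one L) _
      _ = ENNReal.ofReal (1/r) * ∫⁻ x in Metric.ball x₀ r, G x := one_mul _
      _ ≤ ENNReal.ofReal (1/r) *
            (N ^ ((2:ℝ)/3) * (volume (Metric.ball x₀ r)) ^ ((1:ℝ)/3)) :=
          mul_le_mul_right hHolder _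
      _ = (ENNReal.ofReal (1/r) * ENNReal.ofReal r) * (N ^ ((2:ℝ)/3) * V ^ ((1:ℝ)/3)) := by
          rw [hvolpow]; ring
      _ = 1 * (N ^ ((2:ℝ)/3) * V ^ ((1:ℝ)/3)) := by
          rw [← ENNReal.ofReal_mul (by positivity)]
          congr 2
          rw [one_div, inv_mul_cancel₀ hr.ne']
          exact ENNReal.ofReal_one
      _ = N ^ ((2:ℝ)/3) * V ^ ((1:ℝ)/3) := one_mul _
  calc P * ∫⁻ x in Metric.ball x₀ r, ENNReal.ofReal (f x)
      ≤ P * (ENNReal.ofReal (1/r) * volume (Metric.ball x₀ r) +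
          L⁻¹ * ∫⁻ x in Metric.ball x₀ r, G x) := mul_le_mul_right stepA _
    _ = P * (ENNReal.ofReal (1/r) * volume (Metric.ball x₀ r)) +
          P * (L⁻¹ * ∫⁻ x in Metric.ball x₀ r, G x) := mul_add _ _ _
    _ ≤ ENNReal.ofReal C₁ * V + N ^ ((2:ℝ)/3) * V ^ ((1:ℝ)/3) := add_le_add hterm1 hterm2
    _ = K := hK_def.symm
    _ = ENNReal.ofReal K.toReal := (ENNReal.ofReal_toReal hKne).symm
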